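/- (Convergence of limited-memory GeoPG.) Let t = 1/β, κ = β/α, and a memory size m ≥ 1. Let {x_k}_{k≥0}, {c_k}_{k≥0} ⊆ ℝ^n and {R_k²}_{k≥0} ⊆ ℝ be sequences with c_0 = x_0^{++}, R_0² = (1 − 1/κ)·‖G_t(x_0)‖²/α², and set r_k² := (1 − 1/κ)·‖G_t(x_k)‖²/α² and Q_k := ∩_{i=max(1,k−m+1)}^{k} B(x_i^{++}, r_i²). Assume for every k ≥ 1: (a) F(x_k⁺) ≤ F(x_{k−1}⁺) − (t/2)·‖G_t(x_k)‖² and ‖x_k^{++} − c_{k−1}‖² ≥ ‖G_t(x_k)‖²/α²; (b) R_k² = (1 − 1/√κ)·R_{k−1}² and, for every δ ≥ 0, B(c_{k−1}, R_{k−1}² − (t/α)·‖G_t(x_k)‖² − δ) ∩ B(x_k^{++}, r_k² − δ) ⊆ B(c_k, R_k² − δ). Then for every k ≥ 1, Q_k ⊆ B(x_k^{++}, r_k²), B(c_k, R_k²) ⊇ B(c_{k−1}, R_{k−1}² − (t/α)·‖G_t(x_k)‖²) ∩ Q_k, x* ∈ B(c_k, R_k²), and ‖x* − c_k‖² ≤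 (1 − 1/√κ)^k · R_0². -/

import Mathlib

open scoped RealInnerProductSpace

/-- The ball `B(c, r²) = {y : ‖y − c‖² ≤ r2}` (empty when `r² < 0`). -/
def B {n : ℕ} (c : EuclideanSpace ℝ (Fin n)) (r2 : ℝ) : Set (EuclideanSpace ℝ (Fin n)) :=
  {y | ‖y - c‖ ^ 2 ≤ r2}

section helpers

variable {n : ℕ}

lemma lineDeriv' (f : EuclideanSpace ℝ (Fin n) → ℝ) (hf : Differentiable ℝ f)
    (x v : EuclideanSpace ℝ (Fin n)) (s : ℝ) :
    HasDerivAt (fun s : ℝ => f (x + s • v)) ⟪gradient f (x + s • v), v⟫ s := by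
  have h1 : HasDerivAt (fun s : ℝ => x + s • v) v s := by
    simpa using ((hasDerivAt_id s).smul_const v).const_add x
  have h2 : HasFDerivAt f (InnerProductSpace.toDual ℝ _ (gradient f (x + s • v))) (x + s • v) :=
    (hf _).hasGradientAt.hasFDerivAt
  simpa [InnerProductSpace.toDual_apply_apply, Function.comp_def] using h2.comp_hasDerivAt s h1

lemma lineSq' (x v : EuclideanSpace ℝ (Fin n)) (s : ℝ) :
    HasDerivAt (fun s : ℝ => ‖x + s • v‖ ^ 2) (2 * ⟪x + s • v, v⟫) s := by
  have h1 : HasDerivAt (fun s : ℝ => x + s • v) v s := by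
    simpa using ((hasDerivAt_id s).smul_const v).const_add x
  exact h1.norm_sq

lemma convex_tangent (g : EuclideanSpace ℝ (Fin n) → ℝ) (hg : ConvexOn ℝ Set.univ g)
    {x y : EuclideanSpace ℝ (Fin n)} {d : ℝ}
    (hd : HasDerivAt (fun s : ℝ => g (x + s • (y - x))) d 0) : d ≤ g y - g x := by
  have hA : ConvexOn ℝ Set.univ fun s : ℝ => g (x + s • (y - x)) := by
    have h1 := hg.comp_affineMap (AffineMap.lineMap x y : ℝ →ᵃ[ℝ] EuclideanSpace ℝ (Fin n))
    have h2 : (g ∘ (AffineMap.lineMap x y : ℝ →ᵃ[ℝ] EuclideanSpace ℝ (Fin n)))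
        = fun s : ℝ => g (x + s • (y - x)) := by
      funext s
      simp only [Function.comp_apply, AffineMap.lineMap_apply, vsub_eq_sub, vadd_eq_add]
      rw [add_comm]
    rw [← h2]
    simpa using h1
  have h3 := hA.le_slope_of_hasDerivAt (Set.mem_univ (0:ℝ)) (Set.mem_univ 1) zero_lt_one hd
  have e1 : x + (1:ℝ) • (y - x) = y := by module
  have e0 : x + (0:ℝ) • (y - x) = x := by module
  rw [slope_def_field] at h3
  simpa [e1, e0] using h3

lemma strong_lower (α : ℝ) (f : EuclideanSpace ℝ (Fin n) → ℝ) (hf : Differentiable ℝ f)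
    (hsc : ConvexOn ℝ Set.univ (fun z => f z - α / 2 * ‖z‖ ^ 2))
    (w z : EuclideanSpace ℝ (Fin n)) :
    f w + ⟪gradient f w, z - w⟫ + α / 2 * ‖z - w‖ ^ 2 ≤ f z := by
  have hd : HasDerivAt
      (fun s : ℝ => f (w + s • (z - w)) - α / 2 * ‖w + s • (z - w)‖ ^ 2)
      (⟪gradient f (w + (0:ℝ) • (z - w)), z - w⟫
        - α / 2 * (2 * ⟪w + (0:ℝ) • (z - w), z - w⟫)) 0 :=
    (lineDeriv' f hf w (z - w) 0).sub ((lineSq' w (z - w) 0).const_mul (α / 2))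
  have h3 := convex_tangent _ hsc hd
  simp only [zero_smul, add_zero] at h3
  have hx : ‖z - w‖ ^ 2 = ‖z‖ ^ 2 - 2 * ⟪w, z⟫ + ‖w‖ ^ 2 := by
    rw [norm_sub_sq_real, real_inner_comm]
  have hy : ⟪w, z - w⟫ = ⟪w, z⟫ - ‖w‖ ^ 2 := by
    rw [inner_sub_right, real_inner_self_eq_norm_sq]
  rw [hy] at h3
  rw [hx]
  linarith

lemma smooth_upper (β : ℝ) (hβ : 0 < β) (f : EuclideanSpace ℝ (Fin n) → ℝ)
    (hf : Differentiable ℝ f)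
    (hlip : LipschitzWith β.toNNReal (fun z => gradient f z))
    (w z : EuclideanSpace ℝ (Fin n)) :
    f z ≤ f w + ⟪gradient f w, z - w⟫ + β / 2 * ‖z - w‖ ^ 2 := by
  have hq : ConvexOn ℝ Set.univ (fun u : EuclideanSpace ℝ (Fin n) => β / 2 * ‖u‖ ^ 2 - f u) := by
    have key : ∀ x y : EuclideanSpace ℝ (Fin n),
        ConvexOn ℝ Set.univ (fun s : ℝ => β / 2 * ‖x + s • (y - x)‖ ^ 2 - f (x + s • (y - x))) := by
      intro x y
      set v := y - x with hv
      have hD : ∀ s : ℝ, HasDerivAt (fun s : ℝ => β / 2 * ‖x + s • v‖ ^ 2 - f (x + s • v))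
          (β / 2 * (2 * ⟪x + s • v, v⟫) - ⟪gradient f (x + s • v), v⟫) s :=
        fun s => ((lineSq' x v s).const_mul (β / 2)).sub (lineDeriv' f hf x v s)
      have hdiff : Differentiable ℝ (fun s : ℝ => β / 2 * ‖x + s • v‖ ^ 2 - f (x + s • v)) :=
        fun s => (hD s).differentiableAt
      have hder : deriv (fun s : ℝ => β / 2 * ‖x + s • v‖ ^ 2 - f (x + s • v))
          = fun s => β / 2 * (2 * ⟪x + s • v, v⟫) - ⟪gradient f (x + s • v), v⟫ :=
        funext fun s => (hD s).deriv
      have hmono : Monotone (deriv (fun s : ℝ => β / 2 * ‖x + s • v‖ ^ 2 - f (x + s • v))) := by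
        rw [hder]
        intro s s' hss
        have hsub : (x + s' • v) - (x + s • v) = (s' - s) • v := by module
        have hinner : ⟪x + s' • v, v⟫ - ⟪x + s • v, v⟫ = (s' - s) * ‖v‖ ^ 2 := by
          rw [← inner_sub_left, hsub, real_inner_smul_left, real_inner_self_eq_norm_sq]
        have hlips : ‖gradient f (x + s' • v) - gradient f (x + s • v)‖ ≤ β * ((s' - s) * ‖v‖) := by
          have h1 := hlip.dist_le_mul (x + s' • v) (x + s • v)
          rw [dist_eq_norm, dist_eq_norm] at h1
          calc ‖gradient f (x + s' • v) - gradient f (x + s • v)‖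
              ≤ β.toNNReal * ‖(x + s' • v) - (x + s • v)‖ := h1
            _ = β * ((s' - s) * ‖v‖) := by
                rw [hsub, norm_smul, Real.coe_toNNReal _ hβ.le, Real.norm_eq_abs,
                  abs_of_nonneg (by linarith : (0:ℝ) ≤ s' - s)]
        have hexp : ⟪gradient f (x + s' • v), v⟫ - ⟪gradient f (x + s • v), v⟫
            ≤ β * (s' - s) * ‖v‖ ^ 2 := by
          calc ⟪gradient f (x + s' • v), v⟫ - ⟪gradient f (x + s • v), v⟫
              = ⟪gradient f (x + s' • v) - gradient f (x + s • v), v⟫ := (inner_sub_left _ _ _).symm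
            _ ≤ ‖gradient f (x + s' • v) - gradient f (x + s • v)‖ * ‖v‖ :=
                real_inner_le_norm _ _
            _ ≤ β * ((s' - s) * ‖v‖) * ‖v‖ :=
                mul_le_mul_of_nonneg_right hlips (norm_nonneg v)
            _ = β * (s' - s) * ‖v‖ ^ 2 := by ring
        have hβi : β * (⟪x + s' • v, v⟫ - ⟪x + s • v, v⟫) = β * (s' - s) * ‖v‖ ^ 2 := by
          rw [hinner]; ring
        linarith
      exact hmono.convexOn_univ_of_deriv hdiff
    constructor
    · exact convex_univ
    · intro p _ q _ a b ha hb hab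
      have hp : a • p + b • q = p + b • (q - p) := by
        have ha' : a = 1 - b := by linarith
        subst ha'; module
      have h2 := (key p q).2 (Set.mem_univ (0:ℝ)) (Set.mem_univ (1:ℝ)) ha hb hab
      have e0 : p + ((0:ℝ)) • (q - p) = p := by module
      have e1 : p + ((1:ℝ)) • (q - p) = q := by module
      simp only [smul_eq_mul, mul_zero, mul_one, zero_add] at h2
      rw [e0, e1] at h2
      simp only [smul_eq_mul]
      rw [hp]
      exact h2
  have hd : HasDerivAt
      (fun s : ℝ => β / 2 * ‖w + s • (z - w)‖ ^ 2 - f (w + s • (z - w)))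
      (β / 2 * (2 * ⟪w + (0:ℝ) • (z - w), z - w⟫)
        - ⟪gradient f (w + (0:ℝ) • (z - w)), z - w⟫) 0 :=
    ((lineSq' w (z - w) 0).const_mul (β / 2)).sub (lineDeriv' f hf w (z - w) 0)
  have h3 := convex_tangent _ hq hd
  simp only [zero_smul, add_zero] at h3
  have hx : ‖z - w‖ ^ 2 = ‖z‖ ^ 2 - 2 * ⟪w, z⟫ + ‖w‖ ^ 2 := by
    rw [norm_sub_sq_real, real_inner_comm]
  have hy : ⟪w, z - w⟫ = ⟪w, z⟫ - ‖w‖ ^ 2 := by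
    rw [inner_sub_right, real_inner_self_eq_norm_sq]
  rw [hy] at h3
  rw [hx]
  linarith

lemma prox_key {t : ℝ} (ht : 0 < t) (h : EuclideanSpace ℝ (Fin n) → ℝ)
    (hconv : ConvexOn ℝ Set.univ h) (p v z : EuclideanSpace ℝ (Fin n))
    (hmin : ∀ u, t * h p + ‖p - v‖ ^ 2 / 2 ≤ t * h u + ‖u - v‖ ^ 2 / 2) :
    t * h p + ⟪v - p, z - p⟫ ≤ t * h z := by
  have key : ∀ l : ℝ, 0 < l → l ≤ 1 →
      -(l / 2) * ‖z - p‖ ^ 2 ≤ t * (h z - h p) + ⟪p - v, z - p⟫ := by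
    intro l hl hl1
    have h1 := hmin (p + l • (z - p))
    have h2 : h (p + l • (z - p)) ≤ (1 - l) * h p + l * h z := by
      have hc := hconv.2 (Set.mem_univ p) (Set.mem_univ z)
        (by linarith : (0:ℝ) ≤ 1 - l) hl.le (by ring)
      have hpt : (1 - l) • p + l • z = p + l • (z - p) := by module
      rw [hpt] at hc
      simpa [smul_eq_mul] using hc
    have h3 : ‖p + l • (z - p) - v‖ ^ 2
        = ‖p - v‖ ^ 2 + 2 * (l * ⟪p - v, z - p⟫) + l ^ 2 * ‖z - p‖ ^ 2 := by
      have hre : p + l • (z - p) - v = (p - v) + l • (z - p) := by module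
      rw [hre, norm_add_sq_real, real_inner_smul_right, norm_smul, Real.norm_eq_abs,
        mul_pow, sq_abs]
    have h4 : 0 ≤ t * l * (h z - h p) + l * ⟪p - v, z - p⟫ + l ^ 2 / 2 * ‖z - p‖ ^ 2 := by
      have h5 := mul_le_mul_of_nonneg_left h2 ht.le
      rw [h3] at h1
      nlinarith [h1, h5]
    have h6 : 0 ≤ l * (t * (h z - h p) + ⟪p - v, z - p⟫ + l / 2 * ‖z - p‖ ^ 2) := by
      nlinarith [h4]
    have h7 : 0 ≤ t * (h z - h p) + ⟪p - v, z - p⟫ + l / 2 * ‖z - p‖ ^ 2 :=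
      nonneg_of_mul_nonneg_right (by linarith [h6]) hl
    linarith
  have hvp : ⟪v - p, z - p⟫ = -⟪p - v, z - p⟫ := by
    rw [← inner_neg_left]; congr 1; abel
  by_contra hcon
  push_neg at hcon
  have hs0 : t * (h z - h p) + ⟪p - v, z - p⟫ < 0 := by
    rw [hvp] at hcon; linarith
  rcases eq_or_ne ‖z - p‖ 0 with hz0 | hz0
  · have h1 := key 1 one_pos le_rfl
    rw [hz0] at h1
    linarith
  · have hzp : 0 < ‖z - p‖ ^ 2 := by
      have : 0 < ‖z - p‖ := lt_of_le_of_ne (norm_nonneg _) (Ne.symm hz0)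
      positivity
    set s := t * (h z - h p) + ⟪p - v, z - p⟫ with hsdef
    set l := min 1 (-s / ‖z - p‖ ^ 2) with hldef
    have hl : 0 < l := lt_min one_pos (div_pos (neg_pos.2 hs0) hzp)
    have hk := key l hl (min_le_left _ _)
    have hlB : l * ‖z - p‖ ^ 2 ≤ -s := (le_div_iff₀ hzp).mp (min_le_right _ _)
    linarith
end helpers

/-- convergence of limited-memory GeoPG with `t = 1/β` and `κ = β/α`.
Here `P v = Prox_{th}(v)`, `xp k = (x k)⁺`, `G k = G_t(x k)`, `xpp k = (x k)^{++}`,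
`r2 k = (1 − 1/κ)‖G k‖²/α²`, `Q k = ∩_{i = max(1, k−m+1)}^{k} B(xpp i, r2 i)`
(natural subtraction makes `k − m + 1 = max(1, k − m + 1)`), and `F = f + h` with
minimizer `x*`. -/
theorem stmt_15 (n : ℕ) (α β t κ : ℝ) (hα : 0 < α) (hαβ : α ≤ β)
    (ht : t = 1 / β) (hκ : κ = β / α) (m : ℕ) (hm : 1 ≤ m)
    (f h : EuclideanSpace ℝ (Fin n) → ℝ)
    (hsc : ConvexOn ℝ Set.univ (fun z => f z - α / 2 * ‖z‖ ^ 2))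
    (hf : Differentiable ℝ f)
    (hlip : LipschitzWith β.toNNReal (fun z => gradient f z))
    (hconv : ConvexOn ℝ Set.univ h) (hlsc : LowerSemicontinuous h)
    (xstar : EuclideanSpace ℝ (Fin n))
    (hmin : IsMinOn (fun z => f z + h z) Set.univ xstar)
    (P : EuclideanSpace ℝ (Fin n) → EuclideanSpace ℝ (Fin n))
    (hP : ∀ v, IsMinOn (fun u => t * h u + ‖u - v‖ ^ 2 / 2) Set.univ (P v))
    (x c xp G xpp : ℕ → EuclideanSpace ℝ (Fin n)) (R2 r2 : ℕ → ℝ)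
    (Q : ℕ → Set (EuclideanSpace ℝ (Fin n)))
    (hxp : ∀ k, xp k = P (x k - t • gradient f (x k)))
    (hG : ∀ k, G k = t⁻¹ • (x k - xp k))
    (hxpp : ∀ k, xpp k = x k - α⁻¹ • G k)
    (hr2 : ∀ k, r2 k = (1 - 1 / κ) * ‖G k‖ ^ 2 / α ^ 2)
    (hQ : ∀ k, Q k = ⋂ i ∈ Finset.Icc (k - m + 1) k, B (xpp i) (r2 i))
    (hc0 : c 0 = xpp 0)
    (hR0 : R2 0 = (1 - 1 / κ) * ‖G 0‖ ^ 2 / α ^ 2)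
    (ha : ∀ k, 1 ≤ k →
      f (xp k) + h (xp k) ≤ (f (xp (k - 1)) + h (xp (k - 1))) - t / 2 * ‖G k‖ ^ 2
        ∧ ‖xpp k - c (k - 1)‖ ^ 2 ≥ ‖G k‖ ^ 2 / α ^ 2)
    (hb1 : ∀ k, 1 ≤ k → R2 k = (1 - 1 / Real.sqrt κ) * R2 (k - 1))
    (hb2 : ∀ k, 1 ≤ k → ∀ δ : ℝ, 0 ≤ δ →
      B (c (k - 1)) (R2 (k - 1) - t / α * ‖G k‖ ^ 2 - δ) ∩ B (xpp k) (r2 k - δ)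
        ⊆ B (c k) (R2 k - δ)) :
    ∀ k : ℕ, 1 ≤ k →
      Q k ⊆ B (xpp k) (r2 k)
        ∧ B (c (k - 1)) (R2 (k - 1) - t / α * ‖G k‖ ^ 2) ∩ Q k ⊆ B (c k) (R2 k)
        ∧ xstar ∈ B (c k) (R2 k)
        ∧ ‖xstar - c k‖ ^ 2 ≤ (1 - 1 / Real.sqrt κ) ^ k * R2 0 := by
  have hβ : 0 < β := lt_of_lt_of_le hα hαβ
  have ht0 : 0 < t := by rw [ht]; positivity
  have hαne : α ≠ 0 := ne_of_gt hα
  have hβne : β ≠ 0 := ne_of_gt hβ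
  have htβ : t * β = 1 := by rw [ht]; field_simp
  have hFz : ∀ w, f xstar + h xstar ≤ f w + h w := fun w => isMinOn_iff.mp hmin w (Set.mem_univ w)
  -- Key geometric lemma
  have KL : ∀ k, ‖xstar - xpp k‖ ^ 2
      ≤ r2 k - 2 / α * ((f (xp k) + h (xp k)) - (f xstar + h xstar)) := by
    intro k
    set X := x k with hX
    set gk := G k with hgk
    set p := xp k with hpdef
    set u := gradient f X with hu
    set z := xstar with hz
    have htg : t • gk = X - p := by
      rw [hgk, hG k, smul_smul, mul_inv_cancel₀ (ne_of_gt ht0), one_smul]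
    have hpP : p = P (X - t • u) := hxp k
    have F4 : t * h p + ⟪(X - t • u) - p, z - p⟫ ≤ t * h z := by
      apply prox_key ht0 h hconv p (X - t • u) z
      intro w
      rw [hpP]
      exact isMinOn_iff.mp (hP (X - t • u)) w (Set.mem_univ w)
    have F2 := strong_lower α f hf hsc X z
    have F3 := smooth_upper β hβ f hf hlip X p
    have e1 : p - X = -(t • gk) := by rw [htg]; abel
    have e2 : ‖p - X‖ ^ 2 = t ^ 2 * ‖gk‖ ^ 2 := by
      rw [e1, norm_neg, norm_smul, Real.norm_eq_abs, mul_pow, sq_abs]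
    have e3 : ⟪u, p - X⟫ = -(t * ⟪u, gk⟫) := by
      rw [e1, inner_neg_right, real_inner_smul_right]
    have e4 : (X - t • u) - p = t • gk - t • u := by rw [htg]; abel
    have ezp : z - p = (z - X) + t • gk := by rw [htg]; abel
    have e5 : ⟪(X - t • u) - p, z - p⟫ = t * ⟪gk, z - p⟫ - t * ⟪u, z - p⟫ := by
      rw [e4, inner_sub_left, real_inner_smul_left, real_inner_smul_left]
    have e6 : ⟪u, z - p⟫ = ⟪u, z - X⟫ + t * ⟪u, gk⟫ := by
      rw [ezp, inner_add_right, real_inner_smul_right]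
    have e7 : ⟪gk, z - p⟫ = ⟪gk, z - X⟫ + t * ‖gk‖ ^ 2 := by
      rw [ezp, inner_add_right, real_inner_smul_right, real_inner_self_eq_norm_sq]
    have F4' : t * (h p + (⟪gk, z - p⟫ - ⟪u, z - p⟫)) ≤ t * (h z) := by
      rw [e5] at F4; linarith
    have F4'' : h p + (⟪gk, z - p⟫ - ⟪u, z - p⟫) ≤ h z := (mul_le_mul_iff_right₀ ht0).mp F4'
    have hfact : β / 2 * (t ^ 2 * ‖gk‖ ^ 2) = t / 2 * ‖gk‖ ^ 2 := by
      linear_combination (t * ‖gk‖ ^ 2 / 2) * htβ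
    rw [e2, e3, hfact] at F3
    rw [e6, e7] at F4''
    have star : f p + h p ≤ f z + h z - ⟪gk, z - X⟫ - t / 2 * ‖gk‖ ^ 2 - α / 2 * ‖z - X‖ ^ 2 := by
      linarith
    have hzpp : z - xpp k = (z - X) + α⁻¹ • gk := by
      rw [hxpp k, ← hX, ← hgk]; module
    have hnorm : ‖z - xpp k‖ ^ 2
        = ‖z - X‖ ^ 2 + 2 * (α⁻¹ * ⟪z - X, gk⟫) + α⁻¹ ^ 2 * ‖gk‖ ^ 2 := by
      rw [hzpp, norm_add_sq_real, real_inner_smul_right, norm_smul, Real.norm_eq_abs,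
        mul_pow, sq_abs]
    have hC : ⟪z - X, gk⟫ = ⟪gk, z - X⟫ := real_inner_comm _ _
    have hstarC : ⟪gk, z - X⟫
        ≤ ((f z + h z) - (f p + h p)) - t / 2 * ‖gk‖ ^ 2 - α / 2 * ‖z - X‖ ^ 2 := by
      linarith
    have hmul := mul_le_mul_of_nonneg_left hstarC (show (0:ℝ) ≤ 2 * α⁻¹ by positivity)
    have hrhs : 2 * α⁻¹ * (((f z + h z) - (f p + h p)) - t / 2 * ‖gk‖ ^ 2 - α / 2 * ‖z - X‖ ^ 2)
        = -(2 / α * ((f p + h p) - (f z + h z))) - t / α * ‖gk‖ ^ 2 - ‖z - X‖ ^ 2 := by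
      field_simp
      ring
    rw [hrhs] at hmul
    have hr2k : r2 k = α⁻¹ ^ 2 * ‖gk‖ ^ 2 - t / α * ‖gk‖ ^ 2 := by
      rw [hr2 k, hκ, ht, ← hgk]
      field_simp
    rw [hnorm, hC, hr2k]
    linarith
  -- the invariant
  have Inv : ∀ k, ‖xstar - c k‖ ^ 2
      ≤ R2 k - 2 / α * ((f (xp k) + h (xp k)) - (f xstar + h xstar)) := by
    intro k
    induction k with
    | zero =>
      have hRr : R2 0 = r2 0 := by rw [hR0, hr2 0]
      rw [hc0, hRr]
      exact KL 0
    | succ k ih =>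
      have hk1 : 1 ≤ k + 1 := Nat.le_add_left 1 k
      set δ := 2 / α * ((f (xp (k + 1)) + h (xp (k + 1))) - (f xstar + h xstar)) with hδdef
      have hδ : 0 ≤ δ := by
        have := hFz (xp (k + 1))
        have h2α : (0:ℝ) ≤ 2 / α := by positivity
        exact mul_nonneg h2α (by linarith)
      have hdesc := (ha (k + 1) hk1).1
      simp only [Nat.add_sub_cancel] at hdesc
      have hmem1 : xstar ∈ B (c k) (R2 k - t / α * ‖G (k + 1)‖ ^ 2 - δ) := by
        have hstep : (f (xp (k + 1)) + h (xp (k + 1))) - (f xstar + h xstar)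
            + t / 2 * ‖G (k + 1)‖ ^ 2 ≤ (f (xp k) + h (xp k)) - (f xstar + h xstar) := by
          linarith
        have h2 := mul_le_mul_of_nonneg_left hstep (show (0:ℝ) ≤ 2 / α by positivity)
        have he : 2 / α * (((f (xp (k + 1)) + h (xp (k + 1))) - (f xstar + h xstar))
              + t / 2 * ‖G (k + 1)‖ ^ 2)
            = δ + t / α * ‖G (k + 1)‖ ^ 2 := by
          rw [hδdef]; field_simp
        rw [he] at h2
        show ‖xstar - c k‖ ^ 2 ≤ _
        linarith
      have hmem2 : xstar ∈ B (xpp (k + 1)) (r2 (k + 1) - δ) := by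
        show ‖xstar - xpp (k + 1)‖ ^ 2 ≤ _
        exact KL (k + 1)
      have hsub := hb2 (k + 1) hk1 δ hδ
      simp only [Nat.add_sub_cancel] at hsub
      exact hsub ⟨hmem1, hmem2⟩
  have hRk : ∀ j, R2 j = (1 - 1 / Real.sqrt κ) ^ j * R2 0 := by
    intro j
    induction j with
    | zero => simp
    | succ j ihj =>
      rw [hb1 (j + 1) (Nat.le_add_left 1 j)]
      simp only [Nat.add_sub_cancel]
      rw [ihj]
      ring
  intro k hk
  have part1 : Q k ⊆ B (xpp k) (r2 k) := by
    rw [hQ k]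
    intro y hy
    simp only [Set.mem_iInter] at hy
    exact hy k (by simp only [Finset.mem_Icc]; omega)
  have part2 : B (c (k - 1)) (R2 (k - 1) - t / α * ‖G k‖ ^ 2) ∩ Q k ⊆ B (c k) (R2 k) := by
    have h0 := hb2 k hk 0 le_rfl
    simp only [sub_zero] at h0
    intro y hy
    exact h0 ⟨hy.1, part1 hy.2⟩
  have part3' : ‖xstar - c k‖ ^ 2 ≤ R2 k := by
    have h1 := Inv k
    have h2 := hFz (xp k)
    have h2α : (0:ℝ) ≤ 2 / α := by positivity
    nlinarith [mul_nonneg h2α (show (0:ℝ) ≤ (f (xp k) + h (xp k)) - (f xstar + h xstar) by linarith)]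
  exact ⟨part1, part2, part3', le_of_le_of_eq part3' (hRk k)⟩
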